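/- Let p be a prime, s ∈ ℤ_{≥1}, a ∈ ℤ_p ∖ ℤ_{≤0}, and c ∈ 1+pW. Then B_k ∈ W for every k ∈ ℤ_{≥0}; consequently Ĝ^{(σ)}_{a,…,a}(t) ∈ W[[t]] and ℱ̂^{(σ)}_{a,…,a}(t) ∈ W[[t]]. -/

import Mathlib

open scoped Classical

namespace HGP

/-- `𝔽̄_p`, an algebraic closure of the prime field `𝔽_p`. -/
abbrev Fbar (p : ℕ) [Fact p.Prime] : Type _ := AlgebraicClosure (ZMod p)

/-- `W = W(𝔽̄_p)`, the ring of Witt vectors of `𝔽̄_p`. -/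
abbrev Wp (p : ℕ) [Fact p.Prime] : Type _ := WittVector p (Fbar p)

/-- `K = Frac W`. -/
abbrev Kp (p : ℕ) [Fact p.Prime] : Type _ := FractionRing (Wp p)

/-- The canonical embedding `ℤ_p = W(𝔽_p) → W(𝔽̄_p)`. -/
noncomputable def iota (p : ℕ) [Fact p.Prime] : ℤ_[p] →+* Wp p :=
  (WittVector.map (algebraMap (ZMod p) (Fbar p))).comp (WittVector.equiv p).symm.toRingHom

/-- The canonical embedding `W → K`. -/
noncomputable def iotaK (p : ℕ) [Fact p.Prime] : Wp p →+* Kp p := algebraMap (Wp p) (Kp p)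

/-- `l`: the unique integer in `{0,…,p−1}` with `a + l ≡ 0 mod p`. -/
noncomputable def dl (p : ℕ) [Fact p.Prime] (a : ℤ_[p]) : ℕ := (-a).appr 1

/-- `q := 4` if `p = 2` and `q := p` otherwise. -/
def qq (p : ℕ) : ℕ := if p = 2 then 4 else p

/-- `l′`: the unique integer in `{0,…,q−1}` with `a + l′ ≡ 0 mod q`. -/
noncomputable def dl' (p : ℕ) [Fact p.Prime] (a : ℤ_[p]) : ℕ :=
  (-a).appr (if p = 2 then 2 else 1)

/-- `e := l′ − ⌊l′/p⌋`. -/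
noncomputable def de (p : ℕ) [Fact p.Prime] (a : ℤ_[p]) : ℕ := dl' p a - dl' p a / p

/-- `a ∈ ℤ_p ∖ ℤ_{≤0}`, i.e. `a` is not a nonpositive rational integer. -/
def NotNonposInt (p : ℕ) [Fact p.Prime] (a : ℤ_[p]) : Prop := ∀ n : ℕ, a + (n : ℤ_[p]) ≠ 0

/-- `a′` is the Dwork prime of `a`, i.e. `p·a′ = a + l`. -/
def IsDworkPrime (p : ℕ) [Fact p.Prime] (a a' : ℤ_[p]) : Prop :=
  (p : ℤ_[p]) * a' = a + (dl p a : ℤ_[p])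

/-- `A k = ((a)_k / k!)^s ∈ ℤ_p`, characterized by `k!^s · A k = ((a)_k)^s`. -/
def IsHGCoeff (p : ℕ) [Fact p.Prime] (s : ℕ) (a : ℤ_[p]) (A : ℕ → ℤ_[p]) : Prop :=
  ∀ k : ℕ, (k.factorial : ℤ_[p]) ^ s * A k = ((ascPochhammer ℤ_[p] k).eval a) ^ s

/-- `f = (α ↦ c^α)` for `c ∈ 1 + pW`: `c^α` is uniquely characterized by
`c^α ≡ c^{α_n} mod p^n W` for any natural approximation `α_n` of `α` mod `p^n`. -/
def IsCpow (p : ℕ) [Fact p.Prime] (c : Wp p) (f : ℤ_[p] → Wp p) : Prop :=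
  ∀ (α : ℤ_[p]) (n : ℕ), f α - c ^ (α.appr n) ∈ Ideal.span {(p : Wp p) ^ n}

/-- The coefficients `B_k` of `Ĝ^{(σ)}_{a,…,a}(t)`, as elements of `K = Frac W`:
`B_k = (k+a)⁻¹ (A_k − (−1)^{se} A^{(1)}_{(k−l)/p} c^{(k−l)/p + a′})`. -/
noncomputable def BhatK (p : ℕ) [Fact p.Prime] (s : ℕ) (a a' : ℤ_[p]) (A A1 : ℕ → ℤ_[p])
    (cpw : ℤ_[p] → Wp p) (k : ℕ) : Kp p :=
  ((k : Kp p) + iotaK p (iota p a))⁻¹ *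
    (iotaK p (iota p (A k)) -
      (if dl p a ≤ k ∧ p ∣ (k - dl p a) then
        (-1 : Kp p) ^ (s * de p a) * iotaK p (iota p (A1 ((k - dl p a) / p))) *
          iotaK p (cpw ((((k - dl p a) / p : ℕ) : ℤ_[p]) + a'))
      else 0))

/-- `B : ℕ → W` is the coefficient function of `Ĝ^{(σ)}_{a,…,a}(t)`, characterized in `W` by
`(k+a)·B_k = A_k − (−1)^{se} A^{(1)}_{(k−l)/p} c^{(k−l)/p + a′}`. -/
def IsBhat (p : ℕ) [Fact p.Prime] (s : ℕ) (a a' : ℤ_[p]) (A A1 : ℕ → ℤ_[p])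
    (cpw : ℤ_[p] → Wp p) (B : ℕ → Wp p) : Prop :=
  ∀ k : ℕ, ((k : Wp p) + iota p a) * B k =
    iota p (A k) -
      (if dl p a ≤ k ∧ p ∣ (k - dl p a) then
        (-1 : Wp p) ^ (s * de p a) * iota p (A1 ((k - dl p a) / p)) *
          cpw ((((k - dl p a) / p : ℕ) : ℤ_[p]) + a')
      else 0)

/-- A function `ℕ → K` is Lipschitz: it takes values in `W` and
`p^m ∣ (n − n′)` implies `f n − f n′ ∈ p^m W`. -/
def LipschitzSeq (p : ℕ) [Fact p.Prime] (f : ℕ → Kp p) : Prop :=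
  (∀ n : ℕ, f n ∈ (iotaK p).range) ∧
    ∀ n n' m : ℕ, ((p : ℤ) ^ m ∣ (n : ℤ) - (n' : ℤ)) →
      ∃ w : Wp p, f n - f n' = (p : Kp p) ^ m * iotaK p w

/-- `L` is the `p`-adic limit of the sequence `s` in `W`. -/
def WLim (p : ℕ) [Fact p.Prime] (s : ℕ → Wp p) (L : Wp p) : Prop :=
  ∀ m : ℕ, ∃ M : ℕ, ∀ n ≥ M, L - s n ∈ Ideal.span {(p : Wp p) ^ m}

/-- `{α}_k := Π_{1 ≤ i ≤ k, p ∤ (α+i−1)} (α+i−1)`. -/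
noncomputable def curly (p : ℕ) [Fact p.Prime] (α : ℤ_[p]) (k : ℕ) : ℤ_[p] :=
  ∏ j ∈ Finset.range k, if (p : ℤ_[p]) ∣ (α + (j : ℤ_[p])) then 1 else (α + (j : ℤ_[p]))

/-- `W/p^n W`. -/
abbrev Qn (p : ℕ) [Fact p.Prime] (n : ℕ) := Wp p ⧸ Ideal.span {(p : Wp p) ^ n}

/-- Laurent polynomials over `W/p^n`, obtained from polynomials over `W`. -/
noncomputable def laurentOfPolyW (p : ℕ) [Fact p.Prime] (n : ℕ) :
    Polynomial (Wp p) →+* LaurentPolynomial (Qn p n) :=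
  (Polynomial.toLaurent).comp
    (Polynomial.mapRingHom (Ideal.Quotient.mk (Ideal.span {(p : Wp p) ^ n})))

/-- `R_n := (W/p^n)[t,t⁻¹, h(t)⁻¹]`, the localization of the Laurent polynomial ring
over `W/p^n` away from (the image of) `h`. -/
abbrev Rn (p : ℕ) [Fact p.Prime] (h : Polynomial (Wp p)) (n : ℕ) :=
  Localization.Away (laurentOfPolyW p n h)

/-- The canonical map from Laurent polynomials over `W/p^n` to `R_n`. -/
noncomputable def mkRn (p : ℕ) [Fact p.Prime] (h : Polynomial (Wp p)) (n : ℕ) :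
    LaurentPolynomial (Qn p n) →+* Rn p h n := algebraMap _ _

/-- The canonical map from polynomials over `W` to `R_n`. -/
noncomputable def toRn (p : ℕ) [Fact p.Prime] (h : Polynomial (Wp p)) (n : ℕ) :
    Polynomial (Wp p) →+* Rn p h n := (mkRn p h n).comp (laurentOfPolyW p n)


/-! ### Auxiliary lemmas for statement0 -/

section Statement0Aux

open Finset

variable {p : ℕ} [hp : Fact p.Prime]

private lemma zp_dvd_span {m : ℕ} {x : ℤ_[p]} :
    x ∈ Ideal.span {(p : ℤ_[p]) ^ m} ↔ (p : ℤ_[p]) ^ m ∣ x :=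
  Ideal.mem_span_singleton

private lemma int_dvd_iff {m : ℕ} {z : ℤ} :
    (p : ℤ_[p]) ^ m ∣ (z : ℤ_[p]) ↔ (p : ℤ) ^ m ∣ z := by
  rw [← zp_dvd_span, ← PadicInt.norm_le_pow_iff_mem_span_pow,
    PadicInt.norm_int_le_pow_iff_dvd]

private lemma nat_dvd_iff {m n : ℕ} :
    (p : ℤ_[p]) ^ m ∣ (n : ℤ_[p]) ↔ p ^ m ∣ n := by
  have := int_dvd_iff (p := p) (m := m) (z := (n : ℤ))
  simp only [Int.cast_natCast] at this
  rw [this]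
  exact_mod_cast Int.natCast_dvd_natCast

/-- membership counting function -/
private noncomputable def cnt (p : ℕ) [Fact p.Prime] (α : ℤ_[p]) (k : ℕ) : ℕ :=
  ((Finset.range k).filter (fun j : ℕ => (p : ℤ_[p]) ∣ α + (j : ℤ_[p]))).card

private lemma cnt_zero (α : ℤ_[p]) : cnt p α 0 = 0 := by simp [cnt]

private lemma cnt_succ (α : ℤ_[p]) (k : ℕ) :
    cnt p α (k + 1) = cnt p α k + if (p : ℤ_[p]) ∣ α + (k : ℤ_[p]) then 1 else 0 := by
  unfold cnt
  rw [Finset.range_add_one, Finset.filter_insert]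
  split
  · rw [Finset.card_insert_of_notMem (by simp), add_comm]
  · simp

private lemma curly_succ (α : ℤ_[p]) (k : ℕ) :
    curly p α (k + 1) = curly p α k *
      (if (p : ℤ_[p]) ∣ α + (k : ℤ_[p]) then 1 else α + (k : ℤ_[p])) := by
  unfold curly
  rw [Finset.prod_range_succ]

/-- pure nat congruence condition -/
private lemma nat_mod_iff {P l k : ℕ} (hl : l < P) : P ∣ (k + (P - l)) ↔ k % P = l := by
  rw [← Int.natCast_dvd_natCast]
  have h1 : ((k + (P - l) : ℕ) : ℤ) = ((k : ℤ) - l) + P := by push_cast [hl.le]; ring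
  rw [h1]
  have h2 : (P : ℤ) ∣ (k : ℤ) - l + P ↔ (P : ℤ) ∣ (k : ℤ) - l := by
    constructor
    · intro h; simpa using dvd_sub h (dvd_refl (P : ℤ))
    · intro h; exact dvd_add h (dvd_refl _)
  rw [h2, ← Int.modEq_iff_dvd]
  unfold Int.ModEq
  rw [Int.emod_eq_of_lt (by positivity) (by exact_mod_cast hl)]
  have hmc : ((k % P : ℕ) : ℤ) = (k : ℤ) % (P : ℤ) := by push_cast; ring
  constructor
  · intro h
    have : ((k % P : ℕ) : ℤ) = (l : ℤ) := by omega
    exact_mod_cast this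
  · intro h
    omega

private lemma dvd_iff_mod {m : ℕ} {α : ℤ_[p]} {l : ℕ} (hl : l < p ^ m)
    (hd : (p : ℤ_[p]) ^ m ∣ α + (l : ℤ_[p])) (k : ℕ) :
    (p : ℤ_[p]) ^ m ∣ α + (k : ℤ_[p]) ↔ k % p ^ m = l := by
  rw [← nat_mod_iff hl]
  have e : α + (k : ℤ_[p]) =
      ((α + (l : ℤ_[p])) - ((p ^ m : ℕ) : ℤ_[p])) + ((k + (p ^ m - l) : ℕ) : ℤ_[p]) := by
    push_cast [hl.le]; ring
  rw [e]
  have h1 : (p : ℤ_[p]) ^ m ∣ (α + (l : ℤ_[p])) - ((p ^ m : ℕ) : ℤ_[p]) := by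
    refine dvd_sub hd ?_
    push_cast; exact dvd_refl _
  rw [dvd_add_right h1, nat_dvd_iff]

private lemma cnt_closed {α : ℤ_[p]} {l : ℕ} (hl : l < p)
    (hd : (p : ℤ_[p]) ∣ α + (l : ℤ_[p])) (k : ℕ) :
    cnt p α k = (k + (p - 1 - l)) / p := by
  have hp1 : 0 < p := hp.out.pos
  induction k with
  | zero => rw [cnt_zero, Nat.zero_add, Nat.div_eq_of_lt (by omega)]
  | succ k ih =>
    rw [cnt_succ, ih]
    have e : k + 1 + (p - 1 - l) = (k + (p - 1 - l)) + 1 := by omega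
    rw [e, Nat.succ_div]
    congr 1
    have e2 : k + (p - 1 - l) + 1 = k + (p - l) := by omega
    rw [e2]
    have c1 : (p : ℤ_[p]) ∣ α + (k : ℤ_[p]) ↔ k % p = l := by
      have := dvd_iff_mod (m := 1) (p := p) (α := α) (l := l)
        (by simpa using hl) (by simpa using hd) k
      simpa using this
    have c2 : p ∣ k + (p - l) ↔ k % p = l := nat_mod_iff hl
    simp only [c1, c2]

private lemma poch_split (α β : ℤ_[p]) (l : ℕ) (hl : l < p)
    (hβ : (p : ℤ_[p]) * β = α + (l : ℤ_[p])) (k : ℕ) :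
    (ascPochhammer ℤ_[p] k).eval α =
      curly p α k * (p : ℤ_[p]) ^ (cnt p α k) *
        (ascPochhammer ℤ_[p] (cnt p α k)).eval β := by
  have hp1 : 0 < p := hp.out.pos
  have hd : (p : ℤ_[p]) ∣ α + (l : ℤ_[p]) := ⟨β, hβ.symm⟩
  induction k with
  | zero => simp [curly, cnt_zero]
  | succ k ih =>
    rw [ascPochhammer_succ_eval, curly_succ, cnt_succ]
    by_cases hdk : (p : ℤ_[p]) ∣ α + (k : ℤ_[p])
    · rw [if_pos hdk, if_pos hdk]
      have hmod : k % p = l := by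
        have := dvd_iff_mod (m := 1) (p := p) (α := α) (l := l)
          (by simpa using hl) (by simpa using hd) k
        simp only [pow_one] at this
        exact this.1 hdk
      have hk : k = p * (k / p) + l := by
        conv_lhs => rw [← Nat.div_add_mod k p, hmod]
      have hcnt : cnt p α k = k / p := by
        rw [cnt_closed hl hd]
        have e3 : k + (p - 1 - l) = p * (k / p) + (p - 1) := by
          have h5 := hk
          revert h5
          generalize p * (k / p) = t
          intro h5
          omega
        rw [e3, Nat.mul_add_div hp1, Nat.div_eq_of_lt (show p - 1 < p by omega), Nat.add_zero]
      have hval : α + (k : ℤ_[p]) = (p : ℤ_[p]) * (β + (cnt p α k : ℤ_[p])) := by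
        rw [hcnt]
        have : (k : ℤ_[p]) = ((p * (k / p) + l : ℕ) : ℤ_[p]) :=
          congrArg (fun n : ℕ => (n : ℤ_[p])) hk
        rw [this]
        push_cast
        rw [mul_add, hβ]
        ring
      rw [ih, hval, ascPochhammer_succ_eval]
      ring
    · rw [if_neg hdk, if_neg hdk, Nat.add_zero, ih]
      ring

private lemma factorial_split (k : ℕ) :
    ((k.factorial : ℤ_[p])) = curly p 1 k * (p : ℤ_[p]) ^ (k / p) *
      ((k / p).factorial : ℤ_[p]) := by
  have hp1 : 0 < p := hp.out.pos
  have hcast : (1 : ℤ_[p]) + ((p - 1 : ℕ) : ℤ_[p]) = (p : ℤ_[p]) := by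
    push_cast [Nat.cast_sub (show 1 ≤ p by omega)]
    ring
  have h := poch_split (p := p) 1 1 (p - 1) (by omega) (by rw [hcast]; ring) k
  have hcnt : cnt p (1 : ℤ_[p]) k = k / p := by
    rw [cnt_closed (show p - 1 < p by omega) (by rw [hcast])]
    congr 1
    omega
  rw [ascPochhammer_eval_one, ascPochhammer_eval_one, hcnt] at h
  exact h

private lemma dl_add_dvd (a : ℤ_[p]) : (p : ℤ_[p]) ∣ a + (dl p a : ℤ_[p]) := by
  have h := PadicInt.appr_spec 1 (-a)
  rw [zp_dvd_span] at h
  have : a + (dl p a : ℤ_[p]) = -(-a - ((-a).appr 1 : ℤ_[p])) := by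
    unfold dl; ring
  rw [this, pow_one] at *
  exact (dvd_neg).2 h

private lemma dl_lt (a : ℤ_[p]) : dl p a < p := by
  have := PadicInt.appr_lt (-a) 1
  simpa [dl] using this

private lemma cnt_eq_div {α : ℤ_[p]} {l : ℕ} (hl : l < p)
    (hd : (p : ℤ_[p]) ∣ α + (l : ℤ_[p])) {k : ℕ} (hmod : k % p = l) :
    cnt p α k = k / p := by
  have hp1 : 0 < p := hp.out.pos
  have hk : k = p * (k / p) + l := by
    conv_lhs => rw [← Nat.div_add_mod k p, hmod]
  rw [cnt_closed hl hd]
  have e3 : k + (p - 1 - l) = p * (k / p) + (p - 1) := by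
    have h5 := hk
    revert h5
    generalize p * (k / p) = t
    intro h5
    omega
  rw [e3, Nat.mul_add_div hp1, Nat.div_eq_of_lt (show p - 1 < p by omega), Nat.add_zero]

private lemma cnt_one_eq (k : ℕ) : cnt p (1 : ℤ_[p]) k = k / p := by
  have hp1 : 0 < p := hp.out.pos
  have hcast : (1 : ℤ_[p]) + ((p - 1 : ℕ) : ℤ_[p]) = (p : ℤ_[p]) := by
    push_cast [Nat.cast_sub (show 1 ≤ p by omega)]
    ring
  rw [cnt_closed (show p - 1 < p by omega) (by rw [hcast])]
  congr 1
  omega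

private lemma isUnit_of_not_dvd {x : ℤ_[p]} (h : ¬ (p : ℤ_[p]) ∣ x) : IsUnit x := by
  rw [PadicInt.isUnit_iff]
  rcases lt_or_eq_of_le (PadicInt.norm_le_one x) with h1 | h1
  · exact absurd ((PadicInt.norm_lt_one_iff_dvd x).1 h1) h
  · exact h1

private lemma isUnit_curly_one (k : ℕ) : IsUnit (curly p 1 k) := by
  induction k with
  | zero => simp [curly]
  | succ k ih =>
    rw [curly_succ]
    refine ih.mul ?_
    split
    · exact isUnit_one
    · exact isUnit_of_not_dvd (by assumption)

private lemma curly_congr {α : ℤ_[p]} {k m : ℕ} (hm : 1 ≤ m)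
    (h : (p : ℤ_[p]) ^ m ∣ (k : ℤ_[p]) + α) :
    (p : ℤ_[p]) ^ m ∣ curly p α k - (-1) ^ (k - k / p) * curly p 1 k := by
  have hp1 : 0 < p := hp.out.pos
  have hpm : (p : ℤ_[p]) ∣ (k : ℤ_[p]) + α :=
    (dvd_pow_self (p : ℤ_[p]) (by omega : m ≠ 0)).trans h
  set g : ℕ → ℤ_[p] :=
    fun j => if (p : ℤ_[p]) ∣ (j : ℤ_[p]) - (k : ℤ_[p]) then 1 else (j : ℤ_[p]) - (k : ℤ_[p])
    with hg
  have stepA : (p : ℤ_[p]) ^ m ∣ curly p α k - ∏ j ∈ Finset.range k, g j := by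
    rw [← zp_dvd_span, ← Ideal.Quotient.eq]
    unfold curly
    rw [map_prod, map_prod]
    refine Finset.prod_congr rfl ?_
    intro j _
    have hcond : ((p : ℤ_[p]) ∣ α + (j : ℤ_[p])) ↔
        ((p : ℤ_[p]) ∣ (j : ℤ_[p]) - (k : ℤ_[p])) := by
      constructor
      · intro hd
        have := dvd_sub hd hpm
        have e : α + (j : ℤ_[p]) - ((k : ℤ_[p]) + α) = (j : ℤ_[p]) - (k : ℤ_[p]) := by ring
        rwa [e] at this
      · intro hd
        have := dvd_add hd hpm
        have e : (j : ℤ_[p]) - (k : ℤ_[p]) + ((k : ℤ_[p]) + α) = α + (j : ℤ_[p]) := by ring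
        rwa [e] at this
    by_cases hc : (p : ℤ_[p]) ∣ α + (j : ℤ_[p])
    · rw [hg]
      simp only [if_pos hc, if_pos (hcond.1 hc)]
    · rw [hg]
      simp only [if_neg hc, if_neg (fun hh => hc (hcond.2 hh))]
      rw [Ideal.Quotient.eq]
      have e : α + (j : ℤ_[p]) - ((j : ℤ_[p]) - (k : ℤ_[p])) = (k : ℤ_[p]) + α := by ring
      rw [e, zp_dvd_span]
      exact h
  have stepB : ∏ j ∈ Finset.range k, g j = (-1) ^ (k - k / p) * curly p 1 k := by
    rw [← Finset.prod_range_reflect]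
    have hterm : ∀ j ∈ Finset.range k, g (k - 1 - j) =
        (if (p : ℤ_[p]) ∣ 1 + (j : ℤ_[p]) then 1 else 1 + (j : ℤ_[p])) *
          (if (p : ℤ_[p]) ∣ 1 + (j : ℤ_[p]) then 1 else -1) := by
      intro j hj
      rw [Finset.mem_range] at hj
      have hcast : ((k - 1 - j : ℕ) : ℤ_[p]) - (k : ℤ_[p]) = -(1 + (j : ℤ_[p])) := by
        have e : (k - 1 - j) + (1 + j) = k := by omega
        have e2 := congrArg (fun n : ℕ => (n : ℤ_[p])) e
        push_cast at e2
        linear_combination e2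
      rw [hg]
      simp only
      rw [hcast]
      by_cases hc : (p : ℤ_[p]) ∣ 1 + (j : ℤ_[p])
      · rw [if_pos ((dvd_neg).2 hc), if_pos hc, if_pos hc, mul_one]
      · rw [if_neg (fun hh => hc ((dvd_neg).1 hh)), if_neg hc, if_neg hc]
        ring
    rw [Finset.prod_congr rfl hterm, Finset.prod_mul_distrib]
    have hfirst : (∏ j ∈ Finset.range k,
        (if (p : ℤ_[p]) ∣ 1 + (j : ℤ_[p]) then 1 else 1 + (j : ℤ_[p]))) = curly p 1 k := by
      unfold curly
      rfl
    have hsecond : (∏ j ∈ Finset.range k,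
        (if (p : ℤ_[p]) ∣ 1 + (j : ℤ_[p]) then (1 : ℤ_[p]) else -1)) = (-1) ^ (k - k / p) := by
      rw [Finset.prod_ite (fun _ => (1 : ℤ_[p])) (fun _ => (-1 : ℤ_[p]))]
      rw [Finset.prod_const, Finset.prod_const, one_pow, one_mul]
      congr 1
      have hcards := Finset.card_filter_add_card_filter_not
        (s := Finset.range k) (p := fun j : ℕ => (p : ℤ_[p]) ∣ 1 + (j : ℤ_[p]))
      have hcnt : ((Finset.range k).filter
          (fun j : ℕ => (p : ℤ_[p]) ∣ 1 + (j : ℤ_[p]))).card = k / p := by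
        rw [← cnt_one_eq (p := p) k]
        rfl
      rw [Finset.card_range] at hcards
      omega
    rw [hfirst, hsecond, mul_comm]
  rw [stepB] at stepA
  exact stepA

private lemma neg_one_pow_congr {R : Type*} [Ring R] {m n : ℕ} (h : m % 2 = n % 2) :
    ((-1 : R)) ^ m = (-1) ^ n := by
  conv_lhs => rw [← Nat.div_add_mod m 2]
  conv_rhs => rw [← Nat.div_add_mod n 2]
  rw [pow_add, pow_add, pow_mul, pow_mul, neg_one_sq, one_pow, one_pow, h]

private lemma main_cong (s : ℕ) (a a' : ℤ_[p]) (ha' : IsDworkPrime p a a')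
    (A A1 : ℕ → ℤ_[p]) (hA : IsHGCoeff p s a A) (hA1 : IsHGCoeff p s a' A1)
    {k m : ℕ} (hm : 1 ≤ m) (h : (p : ℤ_[p]) ^ m ∣ (k : ℤ_[p]) + a) :
    (p : ℤ_[p]) ^ m ∣ A k - (-1) ^ (s * (k - k / p)) * A1 ((k - dl p a) / p) := by
  have hp1 : 0 < p := hp.out.pos
  set l := dl p a with hldef
  have hl : l < p := dl_lt a
  have hdl : (p : ℤ_[p]) ∣ a + (l : ℤ_[p]) := dl_add_dvd a
  have hpd : (p : ℤ_[p]) ∣ (k : ℤ_[p]) + a :=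
    (dvd_pow_self (p : ℤ_[p]) (by omega : m ≠ 0)).trans h
  have hmod : k % p = l := by
    have hiff := dvd_iff_mod (m := 1) (p := p) (α := a) (l := l)
      (by simpa using hl) (by simpa using hdl) k
    simp only [pow_one] at hiff
    exact hiff.1 (by rwa [add_comm] at hpd)
  have hk : k = p * (k / p) + l := by
    conv_lhs => rw [← Nat.div_add_mod k p, hmod]
  have hkl1 : k - l = p * (k / p) := Nat.sub_eq_of_eq_add hk
  have hkl : (k - l) / p = k / p := by rw [hkl1, Nat.mul_div_cancel_left _ hp1]
  have E1 : (ascPochhammer ℤ_[p] k).eval a =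
      curly p a k * (p : ℤ_[p]) ^ (k / p) * (ascPochhammer ℤ_[p] (k / p)).eval a' := by
    have hps := poch_split a a' l hl ha' k
    rwa [cnt_eq_div hl hdl hmod] at hps
  have E2 := factorial_split (p := p) k
  have hz : ((p : ℤ_[p]) ^ (k / p) * (((k / p).factorial : ℕ) : ℤ_[p])) ≠ 0 := by
    apply mul_ne_zero
    · exact pow_ne_zero _ (Nat.cast_ne_zero.2 hp1.ne')
    · exact Nat.cast_ne_zero.2 (Nat.factorial_ne_zero _)
  have key : (curly p 1 k) ^ s * A k = (curly p a k) ^ s * A1 (k / p) := by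
    have h1 := hA k
    rw [E1, E2] at h1
    have h2 := hA1 (k / p)
    apply mul_right_cancel₀ (pow_ne_zero s hz)
    calc (curly p 1 k) ^ s * A k * ((p : ℤ_[p]) ^ (k / p) * (((k / p).factorial : ℕ) : ℤ_[p])) ^ s
        = (curly p 1 k * (p : ℤ_[p]) ^ (k / p) * (((k / p).factorial : ℕ) : ℤ_[p])) ^ s * A k := by
          ring
      _ = (curly p a k * (p : ℤ_[p]) ^ (k / p) * (ascPochhammer ℤ_[p] (k / p)).eval a') ^ s := h1
      _ = (curly p a k) ^ s * ((ascPochhammer ℤ_[p] (k / p)).eval a') ^ s *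
            ((p : ℤ_[p]) ^ (k / p)) ^ s := by ring
      _ = (curly p a k) ^ s * ((((k / p).factorial : ℕ) : ℤ_[p]) ^ s * A1 (k / p)) *
            ((p : ℤ_[p]) ^ (k / p)) ^ s := by rw [h2]
      _ = (curly p a k) ^ s * A1 (k / p) *
            ((p : ℤ_[p]) ^ (k / p) * (((k / p).factorial : ℕ) : ℤ_[p])) ^ s := by ring
  have hcong := curly_congr hm h
  have hpow : (p : ℤ_[p]) ^ m ∣ (curly p a k) ^ s - ((-1) ^ (k - k / p) * curly p 1 k) ^ s :=
    dvd_trans hcong (sub_dvd_pow_sub_pow _ _ s)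
  have h3 : (p : ℤ_[p]) ^ m ∣
      (curly p 1 k) ^ s * (A k - (-1) ^ (s * (k - k / p)) * A1 (k / p)) := by
    have hh := hpow.mul_right (A1 (k / p))
    have e4 : (curly p 1 k) ^ s * (A k - (-1) ^ (s * (k - k / p)) * A1 (k / p))
        = ((curly p a k) ^ s - ((-1) ^ (k - k / p) * curly p 1 k) ^ s) * A1 (k / p) := by
      rw [mul_sub, key, sub_mul, mul_pow, ← pow_mul, Nat.mul_comm (k - k / p) s]
      ring
    rw [e4]
    exact hh
  have hu : IsUnit ((curly p 1 k) ^ s) := (isUnit_curly_one k).pow s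
  have h4 : (p : ℤ_[p]) ^ m ∣ A k - (-1) ^ (s * (k - k / p)) * A1 (k / p) :=
    hu.dvd_mul_left.1 h3
  rwa [hkl]

private lemma sign_cong (a : ℤ_[p]) {k m : ℕ} (hm : 1 ≤ m)
    (h : (p : ℤ_[p]) ^ m ∣ (k : ℤ_[p]) + a) (s : ℕ) :
    (p : ℤ_[p]) ^ m ∣ ((-1 : ℤ_[p]) ^ (s * (k - k / p)) - (-1) ^ (s * de p a)) := by
  have hp1 : 0 < p := hp.out.pos
  by_cases hpar : (k - k / p) % 2 = de p a % 2
  · have hss : (s * (k - k / p)) % 2 = (s * de p a) % 2 := by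
      rw [Nat.mul_mod, Nat.mul_mod s (de p a), hpar]
    rw [neg_one_pow_congr hss, sub_self]
    exact dvd_zero _
  · have hp2m : p = 2 ∧ m = 1 := by
      by_contra hcon
      apply hpar
      rcases eq_or_ne p 2 with hp2 | hp2
      · have hm2 : 2 ≤ m := by
          rcases Nat.lt_or_ge m 2 with h' | h'
          · exact absurd ⟨hp2, by omega⟩ hcon
          · exact h'
        subst hp2
        have h4 : ((2 : ℕ) : ℤ_[2]) ^ 2 ∣ (k : ℤ_[2]) + a := dvd_trans (pow_dvd_pow _ hm2) h
        have hl'lt : dl' 2 a < 2 ^ 2 := by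
          have := PadicInt.appr_lt (-a) 2
          simpa [dl'] using this
        have hl'dvd : ((2 : ℕ) : ℤ_[2]) ^ 2 ∣ a + (dl' 2 a : ℤ_[2]) := by
          have hsp := PadicInt.appr_spec 2 (-a)
          rw [zp_dvd_span] at hsp
          have hd2 : dl' 2 a = (-a).appr 2 := by unfold dl'; norm_num
          have e : a + (dl' 2 a : ℤ_[2]) = -(-a - ((-a).appr 2 : ℤ_[2])) := by
            rw [hd2]
            ring
          rw [e]
          exact (dvd_neg).2 hsp
        have hmod4 : k % 2 ^ 2 = dl' 2 a :=
          (dvd_iff_mod hl'lt hl'dvd k).1 (by rwa [add_comm] at h4)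
        unfold de
        omega
      · have hodd : p % 2 = 1 := Nat.odd_iff.1 (hp.out.odd_of_ne_two hp2)
        have hde : de p a = dl p a := by
          unfold de dl' dl
          rw [if_neg hp2]
          have hlt := PadicInt.appr_lt (-a) 1
          rw [pow_one] at hlt
          rw [Nat.div_eq_of_lt hlt]
          omega
        have hpd : (p : ℤ_[p]) ∣ (k : ℤ_[p]) + a :=
          (dvd_pow_self (p : ℤ_[p]) (by omega : m ≠ 0)).trans h
        have hmod : k % p = dl p a := by
          have hiff := dvd_iff_mod (m := 1) (p := p) (α := a) (l := dl p a)
            (by simpa using dl_lt a) (by simpa using dl_add_dvd a) k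
          simp only [pow_one] at hiff
          exact hiff.1 (by rwa [add_comm] at hpd)
        have hk : k = p * (k / p) + dl p a := by
          conv_lhs => rw [← Nat.div_add_mod k p, hmod]
        have hQ : (p - 1) * (k / p) = p * (k / p) - k / p := Nat.sub_one_mul p (k / p)
        have hle : k / p ≤ p * (k / p) := Nat.le_mul_of_pos_left (k / p) hp1
        have hev : ((p - 1) * (k / p)) % 2 = 0 :=
          Nat.even_iff.1 ((Nat.even_iff.2 (by omega)).mul_right (k / p))
        have hllt : dl p a < p := dl_lt a
        rw [hde]
        omega
    obtain ⟨hp2, hm1⟩ := hp2m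
    subst hp2
    subst hm1
    have h2 : ((2 : ℕ) : ℤ_[2]) ^ 1 = (2 : ℤ_[2]) := by norm_num
    rw [h2]
    rcases neg_one_pow_eq_or ℤ_[2] (s * (k - k / 2)) with e1 | e1 <;>
      rcases neg_one_pow_eq_or ℤ_[2] (s * de 2 a) with e2 | e2 <;>
        rw [e1, e2] <;> norm_num

private lemma one_add_pow_pow (u : Wp p) (t : ℕ) :
    ∃ w : Wp p, (1 + (p : Wp p) * u) ^ (p ^ t) = 1 + (p : Wp p) ^ (t + 1) * w := by
  have binom_sq : ∀ (x : Wp p) (n : ℕ), ∃ r : Wp p, (1 + x) ^ n = 1 + n * x + x ^ 2 * r := by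
    intro x n
    induction n with
    | zero => exact ⟨0, by push_cast; ring⟩
    | succ n ih =>
      obtain ⟨r, hr⟩ := ih
      refine ⟨r + n + x * r, ?_⟩
      rw [pow_succ, hr]
      push_cast
      ring
  induction t with
  | zero => exact ⟨u, by rw [pow_zero, pow_one, zero_add, pow_one]⟩
  | succ t ih =>
    obtain ⟨w, hw⟩ := ih
    obtain ⟨r, hr⟩ := binom_sq ((p : Wp p) ^ (t + 1) * w) p
    refine ⟨w + (p : Wp p) ^ t * w ^ 2 * r, ?_⟩
    rw [pow_succ, pow_mul, hw, hr]
    ring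

private lemma cpw_one (u c : Wp p) (hc : c = 1 + (p : Wp p) * u)
    (cpw : ℤ_[p] → Wp p) (hcpw : IsCpow p c cpw)
    {α : ℤ_[p]} {m : ℕ} (hm : 1 ≤ m) (hα : (p : ℤ_[p]) ^ (m - 1) ∣ α) :
    (p : Wp p) ^ m ∣ cpw α - 1 := by
  obtain ⟨j, hj⟩ : p ^ (m - 1) ∣ α.appr m := by
    rw [← nat_dvd_iff (p := p)]
    have h1 : α - (α.appr m : ℤ_[p]) ∈ Ideal.span {(p : ℤ_[p]) ^ m} := PadicInt.appr_spec m α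
    rw [zp_dvd_span] at h1
    have h2 : (p : ℤ_[p]) ^ (m - 1) ∣ α - (α.appr m : ℤ_[p]) :=
      (pow_dvd_pow _ (by omega)).trans h1
    have h3 := dvd_sub hα h2
    have e : α - (α - (α.appr m : ℤ_[p])) = (α.appr m : ℤ_[p]) := by ring
    rwa [e] at h3
  have hc1 := hcpw α m
  rw [Ideal.mem_span_singleton] at hc1
  obtain ⟨w1, hw1⟩ := one_add_pow_pow (p := p) u (m - 1)
  have hm' : m - 1 + 1 = m := by omega
  rw [hm'] at hw1
  have hcp : c ^ (α.appr m) = (1 + (p : Wp p) ^ m * w1) ^ j := by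
    rw [hj, pow_mul, hc, hw1]
  have h3 : (p : Wp p) ^ m ∣ c ^ (α.appr m) - 1 := by
    rw [hcp]
    have hdd := sub_dvd_pow_sub_pow (1 + (p : Wp p) ^ m * w1) 1 j
    rw [one_pow] at hdd
    have e : 1 + (p : Wp p) ^ m * w1 - 1 = (p : Wp p) ^ m * w1 := by ring
    rw [e] at hdd
    exact dvd_trans (Dvd.intro w1 rfl) hdd
  have e2 : cpw α - 1 = (cpw α - c ^ (α.appr m)) + (c ^ (α.appr m) - 1) := by ring
  rw [e2]
  exact dvd_add hc1 h3

private lemma iota_injective : Function.Injective (iota p) := by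
  have h1 : Function.Injective (WittVector.map (p := p) (algebraMap (ZMod p) (Fbar p))) :=
    WittVector.map_injective _ (algebraMap (ZMod p) (Fbar p)).injective
  exact h1.comp (WittVector.equiv p).symm.injective


set_option maxHeartbeats 2000000 in
private lemma B_exists (s : ℕ) (a a' : ℤ_[p]) (ha : NotNonposInt p a)
    (ha' : IsDworkPrime p a a') (A A1 : ℕ → ℤ_[p]) (hA : IsHGCoeff p s a A)
    (hA1 : IsHGCoeff p s a' A1) (u c : Wp p) (hc : c = 1 + (p : Wp p) * u)
    (cpw : ℤ_[p] → Wp p) (hcpw : IsCpow p c cpw) (k : ℕ) :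
    ∃ z : Wp p, BhatK p s a a' A A1 cpw k = iotaK p z := by
  have hp1 : 0 < p := hp.out.pos
  have hx : (k : ℤ_[p]) + a ≠ 0 := by
    intro hh
    exact ha k (by rw [add_comm] at hh; exact hh)
  set m : ℕ := ((k : ℤ_[p]) + a).valuation with hmdef
  set ε : ℤ_[p]ˣ := PadicInt.unitCoeff hx with hεdef
  have hspec : (k : ℤ_[p]) + a = (ε : ℤ_[p]) * (p : ℤ_[p]) ^ m := PadicInt.unitCoeff_spec hx
  have hdvd : (p : ℤ_[p]) ^ m ∣ (k : ℤ_[p]) + a := ⟨(ε : ℤ_[p]), by rw [hspec]; ring⟩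
  set D : Wp p := iota p (A k) -
      (if dl p a ≤ k ∧ p ∣ (k - dl p a) then
        (-1 : Wp p) ^ (s * de p a) * iota p (A1 ((k - dl p a) / p)) *
          cpw ((((k - dl p a) / p : ℕ) : ℤ_[p]) + a')
      else 0) with hDdef
  have hD : (p : Wp p) ^ m ∣ D := by
    rcases Nat.eq_zero_or_pos m with hm0 | hm1
    · rw [hm0, pow_zero]
      exact one_dvd _
    · -- the if-condition holds
      set l := dl p a with hldef
      have hl : l < p := dl_lt a
      have hdl : (p : ℤ_[p]) ∣ a + (l : ℤ_[p]) := dl_add_dvd a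
      have hpd : (p : ℤ_[p]) ∣ (k : ℤ_[p]) + a :=
        (dvd_pow_self (p : ℤ_[p]) (by omega : m ≠ 0)).trans hdvd
      have hmod : k % p = l := by
        have hiff := dvd_iff_mod (m := 1) (p := p) (α := a) (l := l)
          (by simpa using hl) (by simpa using hdl) k
        simp only [pow_one] at hiff
        exact hiff.1 (by rwa [add_comm] at hpd)
      have hk : k = p * (k / p) + l := by
        conv_lhs => rw [← Nat.div_add_mod k p, hmod]
      have hlk : l ≤ k := by
        have := Nat.mod_le k p
        omega
      have hkl1 : k - l = p * (k / p) := Nat.sub_eq_of_eq_add hk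
      have hcond : l ≤ k ∧ p ∣ (k - l) := ⟨hlk, ⟨k / p, hkl1⟩⟩
      rw [hDdef, if_pos hcond]
      -- term 1
      have t1 : (p : ℤ_[p]) ^ m ∣
          A k - (-1) ^ (s * de p a) * A1 ((k - l) / p) := by
        have hmc := main_cong s a a' ha' A A1 hA hA1 hm1 hdvd
        have hsc := (sign_cong a hm1 hdvd s).mul_right (A1 ((k - dl p a) / p))
        have e : A k - (-1) ^ (s * de p a) * A1 ((k - l) / p) =
            (A k - (-1) ^ (s * (k - k / p)) * A1 ((k - dl p a) / p)) +
              ((-1) ^ (s * (k - k / p)) - (-1) ^ (s * de p a)) * A1 ((k - dl p a) / p) := by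
          rw [← hldef]
          ring
        rw [e]
        exact dvd_add hmc hsc
      have t1W : (p : Wp p) ^ m ∣
          iota p (A k) - (-1) ^ (s * de p a) * iota p (A1 ((k - l) / p)) := by
        have := map_dvd (iota p) t1
        rw [map_pow, map_natCast, map_sub, map_mul, map_pow, map_neg, map_one] at this
        exact this
      -- term 2
      have hdivl : (k - l) / p = k / p := by rw [hkl1, Nat.mul_div_cancel_left _ hp1]
      have hα : (p : ℤ_[p]) ^ (m - 1) ∣ (((k - l) / p : ℕ) : ℤ_[p]) + a' := by
        have hpmul : (p : ℤ_[p]) * ((((k - l) / p : ℕ) : ℤ_[p]) + a') = (k : ℤ_[p]) + a := by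
          have e0 : p * ((k - l) / p) = k - l := by rw [hdivl, ← hkl1]
          have e1 : (p : ℤ_[p]) * (((k - l) / p : ℕ) : ℤ_[p]) = ((k - l : ℕ) : ℤ_[p]) := by
            exact_mod_cast congrArg (fun n : ℕ => (n : ℤ_[p])) e0
          rw [mul_add, e1, ha', Nat.cast_sub hlk]
          ring
        have hfac : (p : ℤ_[p]) ^ m = (p : ℤ_[p]) * (p : ℤ_[p]) ^ (m - 1) := by
          conv_lhs => rw [show m = (m - 1) + 1 by omega]
          rw [pow_succ]
          ring
        have hdvd' := hdvd
        rw [hfac, ← hpmul] at hdvd'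
        exact (mul_dvd_mul_iff_left
          (show (p : ℤ_[p]) ≠ 0 from Nat.cast_ne_zero.2 hp1.ne')).1 hdvd' 
      have t2 : (p : Wp p) ^ m ∣ cpw ((((k - l) / p : ℕ) : ℤ_[p]) + a') - 1 :=
        cpw_one u c hc cpw hcpw hm1 hα
      have e2 : iota p (A k) -
          (-1 : Wp p) ^ (s * de p a) * iota p (A1 ((k - l) / p)) *
            cpw ((((k - l) / p : ℕ) : ℤ_[p]) + a') =
          (iota p (A k) - (-1) ^ (s * de p a) * iota p (A1 ((k - l) / p))) +
            (-1) ^ (s * de p a) * iota p (A1 ((k - l) / p)) *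
              (1 - cpw ((((k - l) / p : ℕ) : ℤ_[p]) + a')) := by ring
      rw [e2]
      refine dvd_add t1W ?_
      have t2' : (p : Wp p) ^ m ∣ 1 - cpw ((((k - l) / p : ℕ) : ℤ_[p]) + a') := by
        have e3 : 1 - cpw ((((k - l) / p : ℕ) : ℤ_[p]) + a') =
            -(cpw ((((k - l) / p : ℕ) : ℤ_[p]) + a') - 1) := by ring
        rw [e3]
        exact (dvd_neg).2 t2
      exact t2'.mul_left _
  obtain ⟨w, hw⟩ := hD
  have hEu : IsUnit (iota p (ε : ℤ_[p])) := (ε.isUnit).map (iota p)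
  obtain ⟨E, hE⟩ := hEu
  refine ⟨(E⁻¹ : (Wp p)ˣ) * w, ?_⟩
  have hinj : Function.Injective (fun x : ℤ_[p] => iotaK p (iota p x)) := by
    have h2 : Function.Injective (iotaK p) := IsFractionRing.injective (Wp p) (Kp p)
    exact h2.comp iota_injective
  have hne : iotaK p (iota p ((k : ℤ_[p]) + a)) ≠ 0 := by
    intro hh
    apply hx
    have : iotaK p (iota p ((k : ℤ_[p]) + a)) = iotaK p (iota p 0) := by
      simpa using hh
    exact hinj this
  -- rewrite BhatK
  unfold BhatK
  have hfst : (k : Kp p) + iotaK p (iota p a) = iotaK p (iota p ((k : ℤ_[p]) + a)) := by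
    rw [map_add, map_add, map_natCast, map_natCast]
  have hsnd : iotaK p (iota p (A k)) -
      (if dl p a ≤ k ∧ p ∣ (k - dl p a) then
        (-1 : Kp p) ^ (s * de p a) * iotaK p (iota p (A1 ((k - dl p a) / p))) *
          iotaK p (cpw ((((k - dl p a) / p : ℕ) : ℤ_[p]) + a'))
      else 0) = iotaK p D := by
    rw [hDdef, map_sub, apply_ite (iotaK p), map_zero, map_mul, map_mul, map_pow, map_neg,
      map_one]
  rw [hfst, hsnd]
  rw [inv_mul_eq_iff_eq_mul₀ hne]
  rw [← map_mul]
  refine congrArg (iotaK p) ?_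
  rw [hw, hspec, map_mul, map_pow, map_natCast, ← hE]
  calc (p : Wp p) ^ m * w = ((E : Wp p) * (E⁻¹ : (Wp p)ˣ)) * ((p : Wp p) ^ m * w) := by
        rw [E.mul_inv]
        ring
    _ = (E : Wp p) * (p : Wp p) ^ m * ((E⁻¹ : (Wp p)ˣ) * w) := by ring

private lemma coeff_div_mem {K : Type*} [Field K] (S : Subring K) (B C : ℕ → K)
    (hB : ∀ k, B k ∈ S) (hC : ∀ k, C k ∈ S) (hC0 : C 0 = 1) :
    ∀ m : ℕ, PowerSeries.coeff (R := K) m (PowerSeries.mk B * (PowerSeries.mk C)⁻¹) ∈ S := by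
  set F := PowerSeries.mk C with hFdef
  set G := PowerSeries.mk B with hGdef
  have hFc : PowerSeries.constantCoeff F ≠ 0 := by
    rw [hFdef, PowerSeries.constantCoeff_mk, hC0]
    exact one_ne_zero
  have hHF : (G * F⁻¹) * F = G := by
    rw [mul_assoc, PowerSeries.inv_mul_cancel F hFc, mul_one]
  intro n
  induction n using Nat.strong_induction_on with
  | _ n ih =>
    have hcoeff : PowerSeries.coeff (R := K) n G =
        PowerSeries.coeff (R := K) n (G * F⁻¹) * PowerSeries.coeff (R := K) 0 F +
          ∑ ij ∈ (Finset.HasAntidiagonal.antidiagonal n).erase (n, 0),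
            PowerSeries.coeff (R := K) ij.1 (G * F⁻¹) * PowerSeries.coeff (R := K) ij.2 F := by
      have hmem : ((n, 0) : ℕ × ℕ) ∈ Finset.HasAntidiagonal.antidiagonal n := by
        rw [Finset.HasAntidiagonal.mem_antidiagonal]
        omega
      have hsplit := Finset.add_sum_erase (Finset.HasAntidiagonal.antidiagonal n)
        (fun ij : ℕ × ℕ => PowerSeries.coeff (R := K) ij.1 (G * F⁻¹) *
          PowerSeries.coeff (R := K) ij.2 F) hmem
      conv_lhs => rw [← hHF]
      rw [PowerSeries.coeff_mul]
      exact hsplit.symm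
    have hc0 : PowerSeries.coeff (R := K) 0 F = 1 := by
      rw [hFdef, PowerSeries.coeff_mk, hC0]
    have hsolve : PowerSeries.coeff (R := K) n (G * F⁻¹) =
        PowerSeries.coeff (R := K) n G -
          ∑ ij ∈ (Finset.HasAntidiagonal.antidiagonal n).erase (n, 0),
            PowerSeries.coeff (R := K) ij.1 (G * F⁻¹) * PowerSeries.coeff (R := K) ij.2 F := by
      rw [hcoeff, hc0, mul_one]
      ring
    rw [hsolve]
    refine sub_mem ?_ (sum_mem ?_)
    · rw [hGdef, PowerSeries.coeff_mk]
      exact hB n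
    · intro ij hij
      obtain ⟨hne, hmem⟩ := Finset.mem_erase.1 hij
      rw [Finset.HasAntidiagonal.mem_antidiagonal] at hmem
      have hij1 : ij.1 < n := by
        rcases Nat.lt_or_ge ij.1 n with h' | h'
        · exact h'
        · exfalso
          apply hne
          have h1 : ij.1 = n := by omega
          have h2 : ij.2 = 0 := by omega
          exact Prod.ext_iff.2 ⟨h1, h2⟩
      refine mul_mem (ih ij.1 hij1) ?_
      rw [hFdef, PowerSeries.coeff_mk]
      exact hC ij.2

end Statement0Aux


set_option maxHeartbeats 1000000 in
/-- `B_k ∈ W` for all `k`; consequently `Ĝ^{(σ)}_{a,…,a}(t) ∈ W[[t]]`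
and `ℱ̂^{(σ)}_{a,…,a}(t) = Ĝ^{(σ)}_{a,…,a}(t)/F_{a,…,a}(t) ∈ W[[t]]`. -/
theorem statement0 (p : ℕ) [Fact p.Prime] (s : ℕ) (hs : 1 ≤ s)
    (a a' : ℤ_[p]) (ha : NotNonposInt p a) (ha' : IsDworkPrime p a a')
    (A A1 : ℕ → ℤ_[p]) (hA : IsHGCoeff p s a A) (hA1 : IsHGCoeff p s a' A1)
    (u c : Wp p) (hc : c = 1 + (p : Wp p) * u)
    (cpw : ℤ_[p] → Wp p) (hcpw : IsCpow p c cpw) :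
    (∀ k : ℕ, BhatK p s a a' A A1 cpw k ∈ (iotaK p).range) ∧
    (∀ m : ℕ, PowerSeries.coeff (R := Kp p) m
        (PowerSeries.mk (BhatK p s a a' A A1 cpw)) ∈ (iotaK p).range) ∧
    (∀ m : ℕ, PowerSeries.coeff (R := Kp p) m
        (PowerSeries.mk (BhatK p s a a' A A1 cpw) *
          (PowerSeries.mk (fun k => iotaK p (iota p (A k))))⁻¹) ∈ (iotaK p).range) := by
  have hB : ∀ k : ℕ, BhatK p s a a' A A1 cpw k ∈ (iotaK p).range := by
    intro k
    obtain ⟨z, hz⟩ := B_exists s a a' ha ha' A A1 hA hA1 u c hc cpw hcpw k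
    exact ⟨z, hz.symm⟩
  refine ⟨hB, ?_, ?_⟩
  · intro m
    rw [PowerSeries.coeff_mk]
    exact hB m
  · have hA0 : A 0 = 1 := by
      have h0 := hA 0
      simp only [Nat.factorial_zero, Nat.cast_one, one_pow, ascPochhammer_zero,
        Polynomial.eval_one] at h0
      rwa [one_mul] at h0
    exact coeff_div_mem (iotaK p).range _ _ hB (fun k => ⟨iota p (A k), rfl⟩)
      (by rw [hA0, map_one, map_one])


end HGP
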